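/- The map T : {1,2}^ℕ → {1,2}^ℕ defined by (T w)_k = 1 if the number of j ≤ k with w_j = 1 is odd, and 2 otherwise, has topological entropy 0. -/

import Mathlib

/-- The map `T` on `{1,2}^ℕ` (modelled as `ℕ → Bool`, `true` standing for the symbol `1`):
`(T w)_k = 1` iff the number of indices `j ≤ k` with `w_j = 1` is odd. -/
def parityMap (w : ℕ → Bool) : ℕ → Bool := fun k =>
  decide (Odd ((Finset.range (k + 1)).filter fun j => w j = true).card)

open Set Filter Uniformity UniformSpace Dynamics ENNReal EReal

/-- The basic entourages on `ℕ → Bool`. -/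
def Ue (n : ℕ) : Set ((ℕ → Bool) × (ℕ → Bool)) := {p | ∀ i < n, p.1 i = p.2 i}

lemma hasBasis_Ue : (𝓤 (ℕ → Bool)).HasBasis (fun _ : ℕ => True) Ue := by
  have h1 : 𝓤 (ℕ → Bool) = ⨅ i : ℕ, 𝓟 {p : (ℕ → Bool) × (ℕ → Bool) | p.1 i = p.2 i} := by
    rw [Pi.uniformity]
    congr 1
    ext i
    rw [show 𝓤 Bool = 𝓟 SetRel.id from rfl, Filter.comap_principal]
    rfl
  rw [h1]
  refine (Filter.hasBasis_iInf_principal_finite _).to_hasBasis ?_ ?_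
  · intro t ht
    obtain ⟨n, hn⟩ : ∃ n, ∀ i ∈ t, i < n := by
      rcases t.eq_empty_or_nonempty with rfl | hne
      · exact ⟨0, by simp⟩
      · obtain ⟨n, hn⟩ := ht.bddAbove
        exact ⟨n + 1, fun i hi => Nat.lt_succ_of_le (hn hi)⟩
    exact ⟨n, trivial, fun p hp => Set.mem_iInter₂.2 fun i hi => hp i (hn i hi)⟩
  · intro n _
    refine ⟨{i | i < n}, Set.finite_Iio n, fun p hp i hi => Set.mem_iInter₂.1 hp i hi⟩

lemma parityMap_agree {n : ℕ} {x y : ℕ → Bool} (h : ∀ i < n, x i = y i) :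
    ∀ i < n, parityMap x i = parityMap y i := by
  intro i hi
  unfold parityMap
  have : ((Finset.range (i + 1)).filter fun j => x j = true) =
      ((Finset.range (i + 1)).filter fun j => y j = true) := by
    apply Finset.filter_congr
    intro j hj
    rw [Finset.mem_range] at hj
    rw [h j (lt_of_lt_of_le hj (Nat.succ_le_of_lt hi))]
  rw [this]

lemma parityMap_iterate_agree {n : ℕ} {x y : ℕ → Bool} (h : ∀ i < n, x i = y i) (k : ℕ) :
    ∀ i < n, parityMap^[k] x i = parityMap^[k] y i := by
  induction k with
  | zero => simpa using h
  | succ k ih =>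
    rw [Function.iterate_succ_apply', Function.iterate_succ_apply']
    exact parityMap_agree ih

lemma Ue_subset_dynEntourage (n m : ℕ) :
    Ue n ⊆ dynEntourage parityMap (Ue n) m := by
  rintro ⟨x, y⟩ hxy
  rw [mem_dynEntourage]
  intro k _
  exact parityMap_iterate_agree hxy k

lemma coverMincard_le (n m : ℕ) :
    coverMincard parityMap Set.univ (Ue n) m ≤ (2 ^ n : ℕ) := by
  classical
  set s : Finset (ℕ → Bool) :=
    (Finset.univ : Finset (Fin n → Bool)).image
      (fun b i => if h : i < n then b ⟨i, h⟩ else true) with hs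
  have hcover : IsDynCoverOf parityMap Set.univ (Ue n) m (s : Set (ℕ → Bool)) := by
    intro x _
    set xb : ℕ → Bool := fun i => if h : i < n then x i else true with hxb
    have hxbs : xb ∈ s := by
      rw [hs, Finset.mem_image]
      exact ⟨fun j : Fin n => x j, Finset.mem_univ _, rfl⟩
    refine ⟨xb, hxbs, ?_⟩
    apply Ue_subset_dynEntourage n m
    intro i hi
    simp [hxb, hi]
  calc coverMincard parityMap Set.univ (Ue n) m ≤ s.card := hcover.coverMincard_le_card
    _ ≤ ((2 ^ n : ℕ) : ℕ∞) := by
        exact_mod_cast (Finset.card_image_le.trans (by simp))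

lemma coverEntropyEntourage_Ue_le (n : ℕ) :
    coverEntropyEntourage parityMap Set.univ (Ue n) ≤ 0 := by
  have key : coverEntropyEntourage parityMap Set.univ (Ue n) ≤
      atTop.limsup fun m : ℕ => log ((2 ^ n : ℕ∞) : ℝ≥0∞) / (m : EReal) := by
    refine limsup_le_limsup (Eventually.of_forall fun m => ?_)
    apply monotone_div_right_of_nonneg (Nat.cast_nonneg' m)
    exact log_monotone (by beta_reduce; exact_mod_cast ENat.toENNReal_mono (coverMincard_le n m))
  refine key.trans_eq ?_
  apply Tendsto.limsup_eq
  apply EReal.tendsto_const_div_atTop_nhds_zero_nat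
  · rw [ne_eq, log_eq_bot_iff]
    simp
  · rw [ne_eq, log_eq_top_iff]
    simp

/-- the parity map has topological entropy `0`. -/
theorem stmt4 : Dynamics.coverEntropy parityMap Set.univ = 0 := by
  apply le_antisymm
  · rw [coverEntropy_eq_iSup_basis hasBasis_Ue]
    exact iSup₂_le fun n _ => coverEntropyEntourage_Ue_le n
  · exact coverEntropy_nonneg parityMap (Set.univ_nonempty)
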